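/- For any Finsler manifold (M,F), the Sasaki lifted metric G on TM is not bundle-like for the one-dimensional foliation spanned by the vertical Liouville vector field L, nor for the two-dimensional foliation spanned by L and the horizontal Liouville vector field ξ: one has G(∇_{∂̄/∂̄y^a} ∂̄/∂̄y^b + ∇_{∂̄/∂̄y^b} ∂̄/∂̄y^a, L) = −2 g_{ab}, and g_{ab} = 0 is impossible since (g_{ab}) is positive definite. -/

import Mathlib

/-!
A local-coordinate framework for the geometry of the tangent bundle `TM` of an
`n`-dimensional Finsler manifold `(M, F)`, following the paper
"A frame on tangent bundle of a Finsler manifold and the natural foliations".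

All geometric objects are described through their components on a chart domain
`U` of `TM` (avoiding the zero section): a point `p : Pt n` is the pair of
coordinates `(x^i, y^i)`, and a vector field on `TM` is given by its
components in the natural frame `(∂/∂x^i, ∂/∂y^i)`.
-/

open scoped BigOperators

noncomputable section

namespace FinslerFoliations

/-- A point of the tangent bundle `TM` in local coordinates:
`p.1 = (x^i)` is the base point and `p.2 = (y^i)` is the fibre coordinate. -/
abbrev Pt (n : ℕ) : Type := (Fin n → ℝ) × (Fin n → ℝ)

/-- A (local) vector field on `TM`, given by its components in the natural
frame: `(X p).1 i` is the coefficient of `∂/∂x^i` and `(X p).2 i` the one of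
`∂/∂y^i`. -/
abbrev VF (n : ℕ) : Type := Pt n → Pt n

variable {n : ℕ}

/-- The coordinate vector `∂/∂x^i`. -/
def ex (i : Fin n) : Pt n := (Pi.single i 1, 0)

/-- The coordinate vector `∂/∂y^i`. -/
def ey (i : Fin n) : Pt n := (0, Pi.single i 1)

/-- Partial derivative of a scalar function in the constant direction `v`. -/
def pd (v : Pt n) (f : Pt n → ℝ) (p : Pt n) : ℝ := fderiv ℝ f p v

/-- Derivative of a scalar function along a vector field. -/
def Dv (X : VF n) (f : Pt n → ℝ) (p : Pt n) : ℝ := fderiv ℝ f p (X p)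

/-- The Lie bracket of two vector fields, in coordinates. -/
def lie (X Y : VF n) : VF n := fun p => fderiv ℝ Y p (X p) - fderiv ℝ X p (Y p)

/-- Local-coordinate data of an `n`-dimensional Finsler manifold `(M, F)` on a
chart domain `U ⊆ TM` avoiding the zero section: the fundamental function `F`
(smooth, positive and positively `1`-homogeneous in `y`), the fundamental
tensor `g_{ij} = ½ ∂²F²/∂y^i∂y^j` (symmetric and positive definite) with its
inverse `g^{ij}`, the spray coefficients
`G^i = (g^{ij}/4)(∂²F²/∂y^j∂x^k y^k − ∂F²/∂x^j)` and the nonlinear connection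
coefficients `G_i^j = ∂G^j/∂y^i`. -/
structure Chart (n : ℕ) : Type where
  /-- the chart domain in `TM` -/
  U : Set (Pt n)
  hUopen : IsOpen U
  hUslit : ∀ p ∈ U, p.2 ≠ 0
  /-- the fundamental function `F` -/
  F : Pt n → ℝ
  Fpos : ∀ p ∈ U, 0 < F p
  Fsmooth : ContDiffOn ℝ (⊤ : ℕ∞) F U
  Fhomog : ∀ p ∈ U, ∀ t : ℝ, 0 < t → (p.1, t • p.2) ∈ U →
    F (p.1, t • p.2) = t * F p
  /-- the fundamental tensor `g_{ij}` -/
  g : Fin n → Fin n → Pt n → ℝ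
  gdef : ∀ i j, ∀ p ∈ U,
    g i j p = (1/2) * pd (ey i) (pd (ey j) (fun q => F q ^ 2)) p
  gsmooth : ∀ i j, ContDiffOn ℝ (⊤ : ℕ∞) (g i j) U
  gsymm : ∀ i j, ∀ p ∈ U, g i j p = g j i p
  gposdef : ∀ p ∈ U, ∀ v : Fin n → ℝ, v ≠ 0 →
    0 < ∑ i, ∑ j, g i j p * v i * v j
  /-- the inverse `g^{ij}` of the fundamental tensor -/
  ginv : Fin n → Fin n → Pt n → ℝ
  hginv : ∀ i j, ∀ p ∈ U,
    (∑ k, g i k p * ginv k j p) = if i = j then (1:ℝ) else 0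
  /-- the spray coefficients `G^i` -/
  spray : Fin n → Pt n → ℝ
  spraydef : ∀ i, ∀ p ∈ U, spray i p = (1/4) * ∑ j, ginv i j p *
      ((∑ k, pd (ey j) (pd (ex k) (fun q => F q ^ 2)) p * p.2 k)
        - pd (ex j) (fun q => F q ^ 2) p)
  /-- the nonlinear connection coefficients `G_i^j` -/
  N : Fin n → Fin n → Pt n → ℝ
  Ndef : ∀ i j, ∀ p ∈ U, N i j p = pd (ey i) (spray j) p
  Nsmooth : ∀ i j, ContDiffOn ℝ (⊤ : ℕ∞) (N i j) U

variable (fc : Chart n)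

/-- the vertical frame field `∂/∂y^i`. -/
def dyv (i : Fin n) : VF n := fun _ => ey i

/-- the horizontal frame field `δ/δx^i = ∂/∂x^i − G_i^j ∂/∂y^j`. -/
def ddx (i : Fin n) : VF n := fun p => (Pi.single i 1, fun j => -(fc.N i j p))

/-- the vertical Liouville vector field `L = y^i ∂/∂y^i`. -/
def LV : VF n := fun p => ((0 : Fin n → ℝ), p.2)

/-- the horizontal Liouville vector field `ξ = y^i δ/δx^i`. -/
def XI : VF n := fun p => (p.2, fun j => -(∑ i, p.2 i * fc.N i j p))

/-- the dual coframe `δy^i = dy^i + G_j^i dx^j`, applied to a tangent vector. -/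
def dely (i : Fin n) (p : Pt n) (v : Pt n) : ℝ := v.2 i + ∑ j, fc.N j i p * v.1 j

/-- the Sasaki lifted metric `G = g_{ij} dx^i ⊗ dx^j + g_{ij} δy^i ⊗ δy^j`. -/
def Gs (p : Pt n) (v w : Pt n) : ℝ :=
  ∑ i, ∑ j, fc.g i j p * (v.1 i * w.1 j + dely fc i p v * dely fc j p w)

/-- the natural almost complex structure
`J = δ/δx^i ⊗ δy^i − ∂/∂y^i ⊗ dx^i`, as a pointwise endomorphism. -/
def Jm (p : Pt n) (v : Pt n) : Pt n :=
  (fun i => dely fc i p v,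
   fun k => -(∑ i, dely fc i p v * fc.N i k p) - v.1 k)

/-- `J` applied to a vector field. -/
def Jvf (X : VF n) : VF n := fun p => Jm fc p (X p)

/-- the curvature coefficients `R^k_{ij} = δG_i^k/δx^j − δG_j^k/δx^i` of the
nonlinear connection. -/
def Rc (i j k : Fin n) (p : Pt n) : ℝ :=
  Dv (ddx fc j) (fc.N i k) p - Dv (ddx fc i) (fc.N j k) p

/-- the Cartan tensor `g_{ijk} = ½ ∂g_{ij}/∂y^k`. -/
def Cartan (i j k : Fin n) (p : Pt n) : ℝ := (1/2) * pd (ey k) (fc.g i j) p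

/-- the vertical adapted frame field `∂̄/∂̄y^a = E_a^i ∂/∂y^i`. -/
def vb (E : Fin (n-1) → Fin n → Pt n → ℝ) (a : Fin (n-1)) : VF n :=
  fun p => ((0 : Fin n → ℝ), fun i => E a i p)

/-- the horizontal adapted frame field `δ̄/δ̄x^a = J(∂̄/∂̄y^a)`. -/
def hb (E : Fin (n-1) → Fin n → Pt n → ℝ) (a : Fin (n-1)) : VF n :=
  fun p => Jm fc p (vb E a p)

/-- `E` is the coefficient matrix of an adapted local frame
`∂̄/∂̄y^a = E_a^i ∂/∂y^i`, `a = 1, …, n−1`, of the distribution `V'TM` (the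
`G`-orthogonal complement of the vertical Liouville field `L` inside the
vertical distribution `VTM`): the coefficients are smooth, pointwise linearly
independent, and each `∂̄/∂̄y^a` is `G`-orthogonal to `L`. -/
def IsAdaptedFrame (E : Fin (n-1) → Fin n → Pt n → ℝ) : Prop :=
  (∀ a i, ContDiffOn ℝ (⊤ : ℕ∞) (E a i) fc.U) ∧
  (∀ p ∈ fc.U, LinearIndependent ℝ (fun a : Fin (n-1) => (fun i => E a i p))) ∧
  (∀ a, ∀ p ∈ fc.U, Gs fc p (vb E a p) (LV p) = 0)

/-- `g_{ab} = g_{ij} E_a^i E_b^j`, the components of the Sasaki metric in the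
adapted frame. -/
def gb (E : Fin (n-1) → Fin n → Pt n → ℝ) (p : Pt n) (a b : Fin (n-1)) : ℝ :=
  ∑ i, ∑ j, fc.g i j p * E a i p * E b j p

/-- the matrix `(g_{ab})`. -/
def gbMat (E : Fin (n-1) → Fin n → Pt n → ℝ) (p : Pt n) :
    Matrix (Fin (n-1)) (Fin (n-1)) ℝ :=
  Matrix.of fun a b => gb fc E p a b

/-- `(g^{ab})`, the inverse of the matrix `(g_{ab})`. -/
def gbInv (E : Fin (n-1) → Fin n → Pt n → ℝ) (p : Pt n) (a b : Fin (n-1)) : ℝ :=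
  (gbMat fc E p)⁻¹ a b

/-- `g_{abc} = ½ E_a^i E_b^j E_c^k g_{ijk}`, the Cartan tensor in the adapted
frame. -/
def CartanBar (E : Fin (n-1) → Fin n → Pt n → ℝ) (a b c : Fin (n-1))
    (p : Pt n) : ℝ :=
  (1/2) * ∑ i, ∑ j, ∑ k, E a i p * E b j p * E c k p * Cartan fc i j k p

/-- `R_{cab} = E_c^i E_a^j E_b^k R^h_{jk} g_{hi}`, the lowered curvature of the
nonlinear connection in the adapted frame. -/
def Rlow (E : Fin (n-1) → Fin n → Pt n → ℝ) (c a b : Fin (n-1)) (p : Pt n) : ℝ :=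
  ∑ i, ∑ j, ∑ k, ∑ h, E c i p * E a j p * E b k p * Rc fc j k h p * fc.g h i p

/-- `nab` is the Levi-Civita connection of the Sasaki metric `G` on the chart
domain, characterized by the Koszul formula
`2G(∇_X Y, Z) = X G(Y,Z) + Y G(X,Z) − Z G(X,Y)
  − G([X,Z],Y) − G([Y,Z],X) + G([X,Y],Z)`. -/
def IsLeviCivita (nab : VF n → VF n → VF n) : Prop :=
  ∀ X Y Z : VF n,
    ContDiffOn ℝ (⊤ : ℕ∞) X fc.U → ContDiffOn ℝ (⊤ : ℕ∞) Y fc.U →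
    ContDiffOn ℝ (⊤ : ℕ∞) Z fc.U → ∀ p ∈ fc.U,
    2 * Gs fc p (nab X Y p) (Z p) =
      Dv X (fun q => Gs fc q (Y q) (Z q)) p
      + Dv Y (fun q => Gs fc q (X q) (Z q)) p
      - Dv Z (fun q => Gs fc q (X q) (Y q)) p
      - Gs fc p (lie X Z p) (Y p)
      - Gs fc p (lie Y Z p) (X p)
      + Gs fc p (lie X Y p) (Z p)

/-- the `G`-orthogonal projection of a vector field onto the line spanned by
the vertical Liouville field `L` (the normal direction to the indicatrix). -/
def projL (X : VF n) : VF n :=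
  fun p => (Gs fc p (X p) (LV p) / Gs fc p (LV p) (LV p)) • LV p

/-- the curvature tensor `R(X,Y)Z = ∇_X ∇_Y Z − ∇_Y ∇_X Z − ∇_{[X,Y]} Z` of a
connection. -/
def curv (nab : VF n → VF n → VF n) (X Y Z : VF n) : VF n :=
  fun p => nab X (nab Y Z) p - nab Y (nab X Z) p - nab (lie X Y) Z p

/-- membership in `V'TM`: vertical and `G`-orthogonal to `L`. -/
def InV' (p v : Pt n) : Prop := v.1 = 0 ∧ Gs fc p v (LV p) = 0

/-- membership in `V^⊥TM`: `G`-orthogonal to `L`. -/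
def InVperp (p v : Pt n) : Prop := Gs fc p v (LV p) = 0

/-- membership in `HTM ⊕ ⟨L⟩`, the `G`-orthogonal complement of `V'TM`. -/
def InHL (p v : Pt n) : Prop := ∃ c : ℝ, ∀ i, dely fc i p v = c * p.2 i

/-- membership in the line spanned by the vertical Liouville field `L`. -/
def InL (p v : Pt n) : Prop := ∃ c : ℝ, v = c • LV p

/-- membership in the plane spanned by `L` and `ξ`. -/
def InLXi (p v : Pt n) : Prop := ∃ c d : ℝ, v = c • LV p + d • XI fc p

/-- membership in the `G`-orthogonal complement of `⟨L, ξ⟩`. -/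
def InLXiPerp (p v : Pt n) : Prop :=
  Gs fc p v (LV p) = 0 ∧ Gs fc p v (XI fc p) = 0

/-- the contact `1`-form `η = y^i g_{ij} dx^j` of the indicatrix bundle,
applied to a tangent vector. -/
def etaC (p : Pt n) (v : Pt n) : ℝ := ∑ i, ∑ j, p.2 i * fc.g i j p * v.1 j

/-- the `(1,1)`-tensor `φ` of the contact structure of the indicatrix bundle:
`φ = J` on the contact distribution `D` and `φ(ξ) = 0`; on tangent vectors of
`IM` it is given by `φ(v) = J v + η(v) L`. -/
def phiC (p : Pt n) (v : Pt n) : Pt n := Jm fc p v + etaC fc p v • LV p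

/-- `φ` applied to a vector field. -/
def phiVF (X : VF n) : VF n := fun p => phiC fc p (X p)

/-- `η` applied to a vector field, as a scalar function. -/
def etaVF (X : VF n) : Pt n → ℝ := fun p => etaC fc p (X p)

/-- the exterior derivative `dη(X,Y) = X(η(Y)) − Y(η(X)) − η([X,Y])`. -/
def dEta (X Y : VF n) (p : Pt n) : ℝ :=
  Dv X (etaVF fc Y) p - Dv Y (etaVF fc X) p - etaC fc p (lie X Y p)

/-- the normality tensor `N^{(1)} = [φ,φ] + 2 dη ⊗ ξ` of the contact structure
of the indicatrix bundle, evaluated on vector fields, where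
`[φ,φ](X,Y) = φ²[X,Y] + [φX,φY] − φ[φX,Y] − φ[X,φY]` is the Nijenhuis torsion
of `φ`. -/
def Ntensor (X Y : VF n) : VF n := fun p =>
  phiC fc p (phiC fc p (lie X Y p)) + lie (phiVF fc X) (phiVF fc Y) p
    - phiC fc p (lie (phiVF fc X) Y p) - phiC fc p (lie X (phiVF fc Y) p)
    + (2 * dEta fc X Y p) • XI fc p

/-- a vector field of `TM` is tangent to the indicatrix bundle
`IM = {F = 1}` (equivalently, `G`-orthogonal to the normal field `L` along
`IM`). -/
def TangentIM (X : VF n) : Prop :=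
  ∀ p ∈ fc.U, fc.F p = 1 → Gs fc p (X p) (LV p) = 0

/-- The indicatrix bundle `IM`, with its natural contact metric structure
`(φ, η, ξ, Ḡ)`, is a Sasakian manifold: the contact structure is normal, i.e.
the tensor `N^{(1)} = [φ,φ] + 2 dη ⊗ ξ` vanishes on vector fields tangent to
`IM`. -/
def IsSasakianIM : Prop :=
  ∀ X Y : VF n, ContDiffOn ℝ (⊤ : ℕ∞) X fc.U → ContDiffOn ℝ (⊤ : ℕ∞) Y fc.U →
    TangentIM fc X → TangentIM fc Y →
    ∀ p ∈ fc.U, fc.F p = 1 → Ntensor fc X Y p = 0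

/-- the Nijenhuis tensor of the natural almost complex structure `J`:
`N_J(X,Y) = [JX,JY] − J[JX,Y] − J[X,JY] + J²[X,Y]`, with `J² = −Id`. -/
def NijJ (X Y : VF n) : VF n := fun p =>
  lie (Jvf fc X) (Jvf fc Y) p - Jm fc p (lie (Jvf fc X) Y p)
    - Jm fc p (lie X (Jvf fc Y) p) - lie X Y p

/-- the almost complex structure `J̄` on `TM ≅ IM × ℝ` induced by the contact
structure `(φ, η, ξ)` of the indicatrix bundle via
`J̄(X + f L) = φ(X) − f ξ + η(X) L`, where `X` is tangent to `IM`;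
a tangent vector `v` is decomposed as `v = vᵀ + f L` with
`f = G(v,L)/G(L,L)` and `vᵀ` tangent to the indicatrix. -/
def Jbar (p : Pt n) (v : Pt n) : Pt n :=
  phiC fc p (v - (Gs fc p v (LV p) / Gs fc p (LV p) (LV p)) • LV p)
    - (Gs fc p v (LV p) / Gs fc p (LV p) (LV p)) • XI fc p
    + etaC fc p (v - (Gs fc p v (LV p) / Gs fc p (LV p) (LV p)) • LV p) • LV p



/-! ### Auxiliary calculus lemmas -/

section Aux

variable {n : ℕ}

lemma aux_vert_eq_sum (y : Fin n → ℝ) : ((0, y) : Pt n) = ∑ k, y k • ey k := by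
  ext1
  · simp [ey, Prod.fst_sum]
  · simp only [ey, Prod.snd_sum, Prod.smul_mk]
    funext i
    simp [Finset.sum_apply, Pi.single_apply, mul_comm]

lemma aux_fderiv_vert {f : Pt n → ℝ} {p : Pt n} (y : Fin n → ℝ) :
    fderiv ℝ f p (0, y) = ∑ k, y k * fderiv ℝ f p (ey k) := by
  rw [aux_vert_eq_sum, map_sum]
  simp [smul_eq_mul]

lemma aux_contDiffOn_fderiv {F : Type*} [NormedAddCommGroup F] [NormedSpace ℝ F]
    {f : Pt n → F} {U : Set (Pt n)} (hU : IsOpen U)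
    (hf : ContDiffOn ℝ (⊤ : ℕ∞) f U) :
    ContDiffOn ℝ (⊤ : ℕ∞) (fderiv ℝ f) U :=
  ((contDiffOn_infty_iff_fderiv_of_isOpen hU).1 hf).2

lemma aux_contDiffOn_pd {f : Pt n → ℝ} {U : Set (Pt n)} (hU : IsOpen U)
    (hf : ContDiffOn ℝ (⊤ : ℕ∞) f U) (v : Pt n) :
    ContDiffOn ℝ (⊤ : ℕ∞) (fun q => fderiv ℝ f q v) U :=
  (aux_contDiffOn_fderiv hU hf).clm_apply contDiffOn_const

lemma aux_diffAt {F : Type*} [NormedAddCommGroup F] [NormedSpace ℝ F]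
    {f : Pt n → F} {U : Set (Pt n)} (hU : IsOpen U)
    (hf : ContDiffOn ℝ (⊤ : ℕ∞) f U) {p : Pt n} (hp : p ∈ U) :
    DifferentiableAt ℝ f p :=
  (hf.contDiffAt (hU.mem_nhds hp)).differentiableAt (by simp)

lemma aux_pd_swap {f : Pt n → ℝ} {U : Set (Pt n)} (hU : IsOpen U)
    (hf : ContDiffOn ℝ (⊤ : ℕ∞) f U) {p : Pt n} (hp : p ∈ U) (v w : Pt n) :
    fderiv ℝ (fun q => fderiv ℝ f q w) p v = fderiv ℝ (fun q => fderiv ℝ f q v) p w := by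
  have hΦ : DifferentiableAt ℝ (fderiv ℝ f) p :=
    aux_diffAt hU (aux_contDiffOn_fderiv hU hf) hp
  have key : ∀ u : Pt n, fderiv ℝ (fun q => fderiv ℝ f q u) p
      = (ContinuousLinearMap.apply ℝ ℝ u).comp (fderiv ℝ (fderiv ℝ f) p) := by
    intro u
    exact (((ContinuousLinearMap.apply ℝ ℝ u).hasFDerivAt).comp p hΦ.hasFDerivAt).fderiv
  have hsymm : IsSymmSndFDerivAt ℝ f p := by
    refine (hf.contDiffAt (hU.mem_nhds hp)).isSymmSndFDerivAt ?_
    simp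
    exact WithTop.coe_le_coe.mpr le_top
  rw [key w, key v]
  exact hsymm.eq v w

lemma aux_hasFDerivAt_coord2 (k : Fin n) (p : Pt n) :
    HasFDerivAt (fun q : Pt n => q.2 k)
      ((ContinuousLinearMap.proj k).comp (ContinuousLinearMap.snd ℝ (Fin n → ℝ) (Fin n → ℝ))) p := by
  exact ((ContinuousLinearMap.proj k).comp
    (ContinuousLinearMap.snd ℝ (Fin n → ℝ) (Fin n → ℝ))).hasFDerivAt

lemma aux_diffAt_coord2 (k : Fin n) (p : Pt n) :
    DifferentiableAt ℝ (fun q : Pt n => q.2 k) p :=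
  (aux_hasFDerivAt_coord2 k p).differentiableAt

lemma aux_fderiv_coord2 (k : Fin n) (p z : Pt n) :
    fderiv ℝ (fun q : Pt n => q.2 k) p z = z.2 k := by
  rw [(aux_hasFDerivAt_coord2 k p).fderiv]; rfl

/-- Euler's relation for the square of a positively 1-homogeneous function. -/
lemma aux_euler_sq {U : Set (Pt n)} (hU : IsOpen U) {F : Pt n → ℝ}
    (hF : ContDiffOn ℝ (⊤ : ℕ∞) F U)
    (hhom : ∀ p ∈ U, ∀ t : ℝ, 0 < t → (p.1, t • p.2) ∈ U → F (p.1, t • p.2) = t * F p)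
    {p : Pt n} (hp : p ∈ U) :
    fderiv ℝ (fun q => F q ^ 2) p (0, p.2) = 2 * F p ^ 2 := by
  set f : Pt n → ℝ := fun q => F q ^ 2 with hf
  have hdF : DifferentiableAt ℝ F p := aux_diffAt hU hF hp
  have hdf : DifferentiableAt ℝ f p := hdF.pow 2
  set γ : ℝ → Pt n := fun t => (p.1, t • p.2) with hγdef
  have hγ1 : γ 1 = p := by simp [hγdef]
  have hγd : HasDerivAt γ ((0 : Fin n → ℝ), p.2) 1 := by
    refine HasDerivAt.prodMk (hasDerivAt_const 1 p.1) ?_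
    simpa using (hasDerivAt_id (1:ℝ)).smul_const p.2
  have hcomp : HasDerivAt (f ∘ γ) (fderiv ℝ f p ((0 : Fin n → ℝ), p.2)) 1 := by
    have hdf' : HasFDerivAt f (fderiv ℝ f p) (γ 1) := hγ1 ▸ hdf.hasFDerivAt
    simpa using hdf'.comp_hasDerivAt 1 hγd
  have hγcont : Continuous γ := by fun_prop
  have hmem : (γ ⁻¹' U ∩ Set.Ioi 0) ∈ nhds (1:ℝ) := by
    refine Filter.inter_mem ?_ ?_
    · exact hγcont.continuousAt.preimage_mem_nhds (by rw [hγ1]; exact hU.mem_nhds hp)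
    · exact (isOpen_Ioi).mem_nhds (by norm_num)
  have heq : (f ∘ γ) =ᶠ[nhds (1:ℝ)] fun t => t ^ 2 * F p ^ 2 := by
    refine Filter.eventually_of_mem hmem ?_
    rintro t ⟨htU, ht0⟩
    have ht := hhom p hp t ht0 htU
    simp only [Function.comp, hf, hγdef]
    rw [ht]
    ring
  have h2 : HasDerivAt (fun t : ℝ => t ^ 2 * F p ^ 2) (fderiv ℝ f p ((0:Fin n → ℝ), p.2)) 1 :=
    hcomp.congr_of_eventuallyEq heq.symm
  have h3 : HasDerivAt (fun t : ℝ => t ^ 2 * F p ^ 2) (2 * F p ^ 2) 1 := by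
    simpa using (hasDerivAt_pow 2 (1:ℝ)).mul_const (F p ^ 2)
  exact h2.unique h3

lemma aux_fderiv_sum_mul2 {ι : Type*} [Fintype ι] {v w : ι → Pt n → ℝ} {p z : Pt n}
    (hv : ∀ k, DifferentiableAt ℝ (v k) p) (hw : ∀ k, DifferentiableAt ℝ (w k) p) :
    fderiv ℝ (fun q => ∑ k, v k q * w k q) p z
      = ∑ k, (fderiv ℝ (v k) p z * w k p + v k p * fderiv ℝ (w k) p z) := by
  rw [fderiv_fun_sum (A := fun k q => v k q * w k q) (fun k _ => (hv k).mul (hw k))]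
  rw [ContinuousLinearMap.sum_apply]
  refine Finset.sum_congr rfl fun k _ => ?_
  rw [fderiv_fun_mul (hv k) (hw k)]
  simp only [ContinuousLinearMap.add_apply, ContinuousLinearMap.smul_apply, smul_eq_mul]
  ring

lemma aux_fderiv_sum_sum_mul3 {u : Fin n → Fin n → Pt n → ℝ} {c d : Fin n → Pt n → ℝ}
    {p z : Pt n}
    (hu : ∀ i j, DifferentiableAt ℝ (u i j) p) (hc : ∀ i, DifferentiableAt ℝ (c i) p)
    (hd : ∀ j, DifferentiableAt ℝ (d j) p) :
    fderiv ℝ (fun q => ∑ i, ∑ j, u i j q * (c i q * d j q)) p z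
      = ∑ i, ∑ j, (fderiv ℝ (u i j) p z * (c i p * d j p)
          + u i j p * (fderiv ℝ (c i) p z * d j p + c i p * fderiv ℝ (d j) p z)) := by
  rw [fderiv_fun_sum (A := fun i q => ∑ j, u i j q * (c i q * d j q)) (fun i _ => DifferentiableAt.fun_sum
    (fun j _ => (hu i j).mul ((hc i).mul (hd j))))]
  rw [ContinuousLinearMap.sum_apply]
  refine Finset.sum_congr rfl fun i _ => ?_
  rw [aux_fderiv_sum_mul2 (w := fun j q => c i q * d j q) (fun j => hu i j) (fun j => (hc i).mul (hd j))]
  refine Finset.sum_congr rfl fun j _ => ?_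
  rw [fderiv_fun_mul (hc i) (hd j)]
  simp only [ContinuousLinearMap.add_apply, ContinuousLinearMap.smul_apply, smul_eq_mul]
  ring

lemma aux_sum_comm4 {α β : Type*} [Fintype α] [Fintype β] (f : α → α → β → β → ℝ) :
    ∑ a, ∑ b, ∑ i, ∑ j, f a b i j = ∑ i, ∑ j, ∑ a, ∑ b, f a b i j := by
  calc ∑ a, ∑ b, ∑ i, ∑ j, f a b i j
      = ∑ a, ∑ i, ∑ b, ∑ j, f a b i j :=
        Finset.sum_congr rfl fun a _ => Finset.sum_comm
    _ = ∑ i, ∑ a, ∑ b, ∑ j, f a b i j := Finset.sum_comm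
    _ = ∑ i, ∑ a, ∑ j, ∑ b, f a b i j := Finset.sum_congr rfl fun i _ =>
          Finset.sum_congr rfl fun a _ => Finset.sum_comm
    _ = ∑ i, ∑ j, ∑ a, ∑ b, f a b i j := Finset.sum_congr rfl fun i _ => Finset.sum_comm

end Aux

/-! ### Euler relations for the fundamental tensor -/

section Euler

variable {n : ℕ} (fc : Chart n)

/-- `ψ_k = ∂F²/∂y^k`. -/
def psiF (k : Fin n) : Pt n → ℝ := fun q => fderiv ℝ (fun q' => fc.F q' ^ 2) q (ey k)

/-- `χ_{ij} = ∂²F²/∂y^i∂y^j`. -/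
def chiF (i j : Fin n) : Pt n → ℝ := fun q => fderiv ℝ (psiF fc j) q (ey i)

lemma Fsq_smooth : ContDiffOn ℝ (⊤ : ℕ∞) (fun q => fc.F q ^ 2) fc.U := fc.Fsmooth.pow 2

lemma psiF_smooth (k : Fin n) : ContDiffOn ℝ (⊤ : ℕ∞) (psiF fc k) fc.U :=
  aux_contDiffOn_pd fc.hUopen (Fsq_smooth fc) (ey k)

lemma chiF_smooth (i j : Fin n) : ContDiffOn ℝ (⊤ : ℕ∞) (chiF fc i j) fc.U :=
  aux_contDiffOn_pd fc.hUopen (psiF_smooth fc j) (ey i)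

lemma chiF_eq_g (i j : Fin n) {p : Pt n} (hp : p ∈ fc.U) :
    chiF fc i j p = 2 * fc.g i j p := by
  have h := fc.gdef i j p hp
  have h2 : pd (ey i) (pd (ey j) (fun q => fc.F q ^ 2)) p = chiF fc i j p := rfl
  rw [h2] at h
  linarith

lemma chiF_symm (i j : Fin n) {p : Pt n} (hp : p ∈ fc.U) :
    chiF fc i j p = chiF fc j i p := by
  rw [chiF_eq_g fc i j hp, chiF_eq_g fc j i hp, fc.gsymm i j p hp]

lemma eulerA {p : Pt n} (hp : p ∈ fc.U) :
    ∑ k, p.2 k * psiF fc k p = 2 * fc.F p ^ 2 := by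
  have h := aux_euler_sq fc.hUopen fc.Fsmooth fc.Fhomog hp
  rw [aux_fderiv_vert] at h
  exact h

lemma eulerB (i : Fin n) {p : Pt n} (hp : p ∈ fc.U) :
    ∑ k, p.2 k * chiF fc i k p = psiF fc i p := by
  have hfun : (fun q => ∑ k, q.2 k * psiF fc k q) =ᶠ[nhds p]
      (fun q => 2 * fc.F q ^ 2) :=
    Filter.eventuallyEq_of_mem (fc.hUopen.mem_nhds hp) (fun q hq => eulerA fc hq)
  have hder := hfun.fderiv_eq (𝕜 := ℝ)
  have hL : fderiv ℝ (fun q => ∑ k, q.2 k * psiF fc k q) p (ey i)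
      = psiF fc i p + ∑ k, p.2 k * chiF fc i k p := by
    rw [aux_fderiv_sum_mul2 (fun k => aux_diffAt_coord2 k p)
      (fun k => aux_diffAt fc.hUopen (psiF_smooth fc k) hp)]
    rw [Finset.sum_add_distrib]
    congr 1
    · have : ∀ k, fderiv ℝ (fun q : Pt n => q.2 k) p (ey i) * psiF fc k p
          = (if k = i then psiF fc k p else 0) := by
        intro k
        rw [aux_fderiv_coord2]
        by_cases h : k = i <;> simp [ey, h, Pi.single_apply]
      simp only [this]
      simp
  have hR : fderiv ℝ (fun q => 2 * fc.F q ^ 2) p (ey i) = 2 * psiF fc i p := by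
    rw [((aux_diffAt fc.hUopen (Fsq_smooth fc) hp).hasFDerivAt.const_mul (2:ℝ)).fderiv]
    simp only [ContinuousLinearMap.smul_apply, smul_eq_mul]
    rfl
  have := hL.symm.trans ((congrFun (congrArg _ hder) (ey i)).trans hR)
  linarith [this]

lemma eulerC (i j : Fin n) {p : Pt n} (hp : p ∈ fc.U) :
    ∑ k, p.2 k * fderiv ℝ (chiF fc i k) p (ey j) = 0 := by
  have hfun : (fun q => ∑ k, q.2 k * chiF fc i k q) =ᶠ[nhds p] (psiF fc i) :=
    Filter.eventuallyEq_of_mem (fc.hUopen.mem_nhds hp) (fun q hq => eulerB fc i hq)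
  have hder := hfun.fderiv_eq (𝕜 := ℝ)
  have hL : fderiv ℝ (fun q => ∑ k, q.2 k * chiF fc i k q) p (ey j)
      = chiF fc i j p + ∑ k, p.2 k * fderiv ℝ (chiF fc i k) p (ey j) := by
    rw [aux_fderiv_sum_mul2 (fun k => aux_diffAt_coord2 k p)
      (fun k => aux_diffAt fc.hUopen (chiF_smooth fc i k) hp)]
    rw [Finset.sum_add_distrib]
    congr 1
    · have : ∀ k, fderiv ℝ (fun q : Pt n => q.2 k) p (ey j) * chiF fc i k p
          = (if k = j then chiF fc i k p else 0) := by
        intro k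
        rw [aux_fderiv_coord2]
        by_cases h : k = j <;> simp [ey, h, Pi.single_apply]
      simp only [this]
      simp
  have hR : fderiv ℝ (psiF fc i) p (ey j) = chiF fc j i p := rfl
  have hcomb := hL.symm.trans ((congrFun (congrArg _ hder) (ey j)).trans hR)
  have hsym := chiF_symm fc i j hp
  linarith [hcomb]

lemma eulerD (i j : Fin n) {p : Pt n} (hp : p ∈ fc.U) :
    ∑ k, p.2 k * fderiv ℝ (fc.g i j) p (ey k) = 0 := by
  -- g_{ij} = ½ χ_{ij} on U
  have hg : fc.g i j =ᶠ[nhds p] fun q => (1/2 : ℝ) * chiF fc i j q :=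
    Filter.eventuallyEq_of_mem (fc.hUopen.mem_nhds hp)
      (fun q hq => by rw [chiF_eq_g fc i j hq]; ring)
  -- χ_{ij} = χ_{ji} = ∂_j ψ_i  on U
  have hchi : chiF fc i j =ᶠ[nhds p] fun q => fderiv ℝ (psiF fc i) q (ey j) :=
    Filter.eventuallyEq_of_mem (fc.hUopen.mem_nhds hp)
      (fun q hq => chiF_symm fc i j hq)
  have hterm : ∀ k, fderiv ℝ (fc.g i j) p (ey k)
      = (1/2 : ℝ) * fderiv ℝ (chiF fc k i) p (ey j) := by
    intro k
    rw [hg.fderiv_eq,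
      ((aux_diffAt fc.hUopen (chiF_smooth fc i j) hp).hasFDerivAt.const_mul ((1:ℝ)/2)).fderiv]
    simp only [ContinuousLinearMap.smul_apply, smul_eq_mul]
    congr 1
    rw [hchi.fderiv_eq]
    have hswap := aux_pd_swap fc.hUopen (psiF_smooth fc i) hp (ey k) (ey j)
    exact hswap
  have hflip : ∀ k, fderiv ℝ (chiF fc k i) p (ey j)
      = fderiv ℝ (chiF fc i k) p (ey j) := by
    intro k
    have h1 : chiF fc k i =ᶠ[nhds p] chiF fc i k :=
      Filter.eventuallyEq_of_mem (fc.hUopen.mem_nhds hp)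
        (fun q hq => chiF_symm fc k i hq)
    rw [h1.fderiv_eq]
  calc ∑ k, p.2 k * fderiv ℝ (fc.g i j) p (ey k)
      = ∑ k, (1/2 : ℝ) * (p.2 k * fderiv ℝ (chiF fc i k) p (ey j)) := by
        refine Finset.sum_congr rfl fun k _ => ?_
        rw [hterm k, hflip k]; ring
    _ = (1/2 : ℝ) * ∑ k, p.2 k * fderiv ℝ (chiF fc i k) p (ey j) := by
        rw [Finset.mul_sum]
    _ = 0 := by rw [eulerC fc i j hp]; ring

end Euler

/-! ### Algebraic lemmas for the Sasaki metric and the adapted frame -/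

section GsAlg

variable {n : ℕ} (fc : Chart n)

lemma dely_add (i : Fin n) (p u w : Pt n) :
    dely fc i p (u + w) = dely fc i p u + dely fc i p w := by
  simp only [dely, Prod.fst_add, Prod.snd_add, Pi.add_apply, mul_add,
    Finset.sum_add_distrib]
  ring

lemma Gs_add_left (p u w z : Pt n) :
    Gs fc p (u + w) z = Gs fc p u z + Gs fc p w z := by
  simp only [Gs]
  rw [← Finset.sum_add_distrib]
  refine Finset.sum_congr rfl fun i _ => ?_
  rw [← Finset.sum_add_distrib]
  refine Finset.sum_congr rfl fun j _ => ?_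
  rw [dely_add]
  simp only [Prod.fst_add, Pi.add_apply]
  ring

lemma Gs_zero_left (p z : Pt n) : Gs fc p 0 z = 0 := by
  simp [Gs, dely]

lemma dely_vb (E : Fin (n-1) → Fin n → Pt n → ℝ) (a : Fin (n-1)) (i : Fin n) (q : Pt n) :
    dely fc i q (vb E a q) = E a i q := by
  simp [dely, vb]

lemma Gs_vb_vb (E : Fin (n-1) → Fin n → Pt n → ℝ) (a b : Fin (n-1)) (q : Pt n) :
    Gs fc q (vb E a q) (vb E b q) = ∑ i, ∑ j, fc.g i j q * (E a i q * E b j q) := by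
  simp [Gs, dely, vb]

lemma Gs_vert_vb (E : Fin (n-1) → Fin n → Pt n → ℝ) (b : Fin (n-1)) (p : Pt n)
    (u : Fin n → ℝ) :
    Gs fc p ((0, u) : Pt n) (vb E b p) = ∑ i, ∑ j, fc.g i j p * (u i * E b j p) := by
  simp [Gs, dely, vb]

lemma dely_XI (j : Fin n) (p : Pt n) : dely fc j p (XI fc p) = 0 := by
  simp only [dely, XI]
  rw [Finset.sum_congr rfl (fun k _ => mul_comm (fc.N k j p) (p.2 k))]
  ring

lemma Gs_vb_XI (E : Fin (n-1) → Fin n → Pt n → ℝ) (a : Fin (n-1)) (p : Pt n) :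
    Gs fc p (vb E a p) (XI fc p) = 0 := by
  simp only [Gs]
  refine Finset.sum_eq_zero fun i _ => Finset.sum_eq_zero fun j _ => ?_
  rw [dely_XI]
  simp [vb]

lemma sum_g_comm {p : Pt n} (hp : p ∈ fc.U) (u v : Fin n → ℝ) :
    ∑ i, ∑ j, fc.g i j p * (u i * v j) = ∑ i, ∑ j, fc.g i j p * (v i * u j) := by
  rw [Finset.sum_comm]
  refine Finset.sum_congr rfl fun i _ => Finset.sum_congr rfl fun j _ => ?_
  rw [fc.gsymm j i p hp]
  ring

lemma gb_eq (E : Fin (n-1) → Fin n → Pt n → ℝ) (p : Pt n) (a b : Fin (n-1)) :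
    gb fc E p a b = ∑ i, ∑ j, fc.g i j p * (E a i p * E b j p) := by
  refine Finset.sum_congr rfl fun i _ => Finset.sum_congr rfl fun j _ => by ring

lemma contDiffOn_vb (E : Fin (n-1) → Fin n → Pt n → ℝ) (a : Fin (n-1))
    (h : ∀ i, ContDiffOn ℝ (⊤ : ℕ∞) (E a i) fc.U) :
    ContDiffOn ℝ (⊤ : ℕ∞) (vb E a) fc.U :=
  ContDiffOn.prodMk contDiffOn_const (contDiffOn_pi.2 h)

lemma contDiffOn_LV {U : Set (Pt n)} : ContDiffOn ℝ (⊤ : ℕ∞) (LV (n := n)) U :=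
  (ContDiff.prodMk contDiff_const contDiff_snd).contDiffOn

lemma fderiv_vb_apply (E : Fin (n-1) → Fin n → Pt n → ℝ) (a : Fin (n-1)) {p : Pt n}
    (h : ∀ i, DifferentiableAt ℝ (E a i) p) (z : Pt n) :
    fderiv ℝ (vb E a) p z = ((0 : Fin n → ℝ), fun i => fderiv ℝ (E a i) p z) := by
  have H : HasFDerivAt (vb E a)
      ((0 : Pt n →L[ℝ] (Fin n → ℝ)).prod
        (ContinuousLinearMap.pi fun i => fderiv ℝ (E a i) p)) p :=
    HasFDerivAt.prodMk (hasFDerivAt_const _ _) (hasFDerivAt_pi.2 fun i => (h i).hasFDerivAt)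
  rw [H.fderiv]
  rfl

lemma fderiv_LV_apply (p z : Pt n) :
    fderiv ℝ (LV (n := n)) p z = ((0 : Fin n → ℝ), z.2) := by
  have H : HasFDerivAt (LV (n := n))
      ((0 : Pt n →L[ℝ] (Fin n → ℝ)).prod
        (ContinuousLinearMap.snd ℝ (Fin n → ℝ) (Fin n → ℝ))) p :=
    HasFDerivAt.prodMk (hasFDerivAt_const _ _)
      ((ContinuousLinearMap.snd ℝ (Fin n → ℝ) (Fin n → ℝ)).hasFDerivAt)
  rw [H.fderiv]
  rfl

lemma lie_vb_LV (E : Fin (n-1) → Fin n → Pt n → ℝ) (a : Fin (n-1)) {p : Pt n}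
    (h : ∀ i, DifferentiableAt ℝ (E a i) p) :
    lie (vb E a) LV p
      = ((0 : Fin n → ℝ), fun i => E a i p - fderiv ℝ (E a i) p (LV p)) := by
  simp only [lie]
  rw [fderiv_LV_apply, fderiv_vb_apply E a h]
  ext1
  · simp
  · funext i
    simp [vb]

end GsAlg


/-! ### The symmetrized Koszul computation -/

lemma key_symmetrized {n : ℕ} (fc : Chart n) (E : Fin (n-1) → Fin n → Pt n → ℝ)
    (hE : IsAdaptedFrame fc E) (nab : VF n → VF n → VF n) (hnab : IsLeviCivita fc nab)
    (a b : Fin (n-1)) {p : Pt n} (hp : p ∈ fc.U) :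
    Gs fc p (nab (vb E a) (vb E b) p + nab (vb E b) (vb E a) p) (LV p)
      = -2 * gb fc E p a b := by
  obtain ⟨hEsm, hEli, hEperp⟩ := hE
  have hXa : ContDiffOn ℝ (⊤:ℕ∞) (vb E a) fc.U := contDiffOn_vb fc E a (hEsm a)
  have hXb : ContDiffOn ℝ (⊤:ℕ∞) (vb E b) fc.U := contDiffOn_vb fc E b (hEsm b)
  have hZ : ContDiffOn ℝ (⊤:ℕ∞) (LV (n:=n)) fc.U := contDiffOn_LV
  have K1 := hnab (vb E a) (vb E b) LV hXa hXb hZ p hp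
  have K2 := hnab (vb E b) (vb E a) LV hXb hXa hZ p hp
  have hEd : ∀ x i, DifferentiableAt ℝ (E x i) p :=
    fun x i => aux_diffAt fc.hUopen (hEsm x i) hp
  have hgd : ∀ i j, DifferentiableAt ℝ (fc.g i j) p :=
    fun i j => aux_diffAt fc.hUopen (fc.gsmooth i j) hp
  have e1 : ∀ x y : Fin (n-1), Dv (vb E x) (fun q => Gs fc q (vb E y q) (LV q)) p = 0 := by
    intro x y
    have heq : (fun q => Gs fc q (vb E y q) (LV q)) =ᶠ[nhds p] (fun _ => (0:ℝ)) :=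
      Filter.eventuallyEq_of_mem (fc.hUopen.mem_nhds hp) (fun q hq => hEperp y q hq)
    simp only [Dv]
    rw [heq.fderiv_eq (𝕜 := ℝ)]
    simp
  have e2 : ∀ x y : Fin (n-1), Dv LV (fun q => Gs fc q (vb E x q) (vb E y q)) p
      = (∑ i, ∑ j, fc.g i j p * (fderiv ℝ (E x i) p (LV p) * E y j p))
        + (∑ i, ∑ j, fc.g i j p * (E x i p * fderiv ℝ (E y j) p (LV p))) := by
    intro x y
    simp only [Dv]
    have hA : (fun q => Gs fc q (vb E x q) (vb E y q))
        = fun q => ∑ i, ∑ j, fc.g i j q * (E x i q * E y j q) :=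
      funext fun q => Gs_vb_vb fc E x y q
    rw [hA]
    rw [aux_fderiv_sum_sum_mul3 hgd (fun i => hEd x i) (fun j => hEd y j)]
    have hz : ∀ i j, fderiv ℝ (fc.g i j) p (LV p) = 0 := by
      intro i j
      have hLVp : LV p = ((0 : Fin n → ℝ), p.2) := rfl
      rw [hLVp, aux_fderiv_vert]
      exact eulerD fc i j hp
    simp only [hz, zero_mul, zero_add]
    have hsplit : ∀ i j : Fin n,
        fc.g i j p * (fderiv ℝ (E x i) p (LV p) * E y j p
          + E x i p * fderiv ℝ (E y j) p (LV p))
        = fc.g i j p * (fderiv ℝ (E x i) p (LV p) * E y j p)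
          + fc.g i j p * (E x i p * fderiv ℝ (E y j) p (LV p)) :=
      fun i j => mul_add _ _ _
    simp only [hsplit, Finset.sum_add_distrib]
  have e4 : ∀ x y : Fin (n-1), Gs fc p (lie (vb E x) LV p) (vb E y p)
      = (∑ i, ∑ j, fc.g i j p * (E x i p * E y j p))
        - (∑ i, ∑ j, fc.g i j p * (fderiv ℝ (E x i) p (LV p) * E y j p)) := by
    intro x y
    rw [lie_vb_LV E x (hEd x), Gs_vert_vb]
    have hsplit : ∀ i j : Fin n,
        fc.g i j p * ((E x i p - fderiv ℝ (E x i) p (LV p)) * E y j p)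
        = fc.g i j p * (E x i p * E y j p)
          - fc.g i j p * (fderiv ℝ (E x i) p (LV p) * E y j p) := fun i j => by ring
    simp only [hsplit, Finset.sum_sub_distrib]
  have e6 : Gs fc p (lie (vb E a) (vb E b) p) (LV p)
      + Gs fc p (lie (vb E b) (vb E a) p) (LV p) = 0 := by
    have h1 : lie (vb E a) (vb E b) p + lie (vb E b) (vb E a) p = 0 := by
      simp only [lie]; abel
    have h2 := Gs_add_left fc p (lie (vb E a) (vb E b) p) (lie (vb E b) (vb E a) p) (LV p)
    rw [h1, Gs_zero_left] at h2
    linarith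
  have s1 : ∑ i, ∑ j, fc.g i j p * (E b i p * E a j p)
      = ∑ i, ∑ j, fc.g i j p * (E a i p * E b j p) := sum_g_comm fc hp _ _
  have s2 : ∑ i, ∑ j, fc.g i j p * (fderiv ℝ (E b i) p (LV p) * E a j p)
      = ∑ i, ∑ j, fc.g i j p * (E a i p * fderiv ℝ (E b j) p (LV p)) := sum_g_comm fc hp _ _
  have s3 : ∑ i, ∑ j, fc.g i j p * (fderiv ℝ (E a i) p (LV p) * E b j p)
      = ∑ i, ∑ j, fc.g i j p * (E b i p * fderiv ℝ (E a j) p (LV p)) := sum_g_comm fc hp _ _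
  rw [Gs_add_left, gb_eq]
  rw [e1 a b, e1 b a, e2 a b, e4 a b, e4 b a] at K1
  rw [e1 b a, e1 a b, e2 b a, e4 b a, e4 a b] at K2
  linarith [K1, K2, e6, s1, s2, s3]

/-- For any Finsler manifold `(M,F)`, the Sasaki metric `G`
on `TM` is not bundle-like for the one-dimensional foliation spanned by the
vertical Liouville field `L`, nor for the two-dimensional foliation spanned by
`L` and the horizontal Liouville field `ξ`: one has
`G(∇_{∂̄/∂̄y^a} ∂̄/∂̄y^b + ∇_{∂̄/∂̄y^b} ∂̄/∂̄y^a, L) = −2 g_{ab}`, and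
`g_{ab} = 0` is impossible since `(g_{ab})` is positive definite. -/
theorem L_and_LXi_not_bundle_like {n : ℕ} (hn : 2 ≤ n) (fc : Chart n)
    (hU : fc.U.Nonempty)
    (E : Fin (n-1) → Fin n → Pt n → ℝ) (hE : IsAdaptedFrame fc E)
    (nab : VF n → VF n → VF n) (hnab : IsLeviCivita fc nab) :
    (∀ a b : Fin (n-1), ∀ p ∈ fc.U,
      Gs fc p (nab (vb E a) (vb E b) p + nab (vb E b) (vb E a) p) (LV p)
        = -2 * gb fc E p a b) ∧
    (∀ p ∈ fc.U, ∀ v : Fin (n-1) → ℝ, v ≠ 0 →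
      0 < ∑ a, ∑ b, gb fc E p a b * v a * v b) ∧
    ¬ (∀ X Y : VF n, ContDiffOn ℝ (⊤ : ℕ∞) X fc.U →
        ContDiffOn ℝ (⊤ : ℕ∞) Y fc.U →
        (∀ p ∈ fc.U, InVperp fc p (X p)) → (∀ p ∈ fc.U, InVperp fc p (Y p)) →
        ∀ Z : VF n, ContDiffOn ℝ (⊤ : ℕ∞) Z fc.U →
        (∀ p ∈ fc.U, InL p (Z p)) →
        ∀ p ∈ fc.U, Gs fc p (nab X Y p + nab Y X p) (Z p) = 0) ∧
    ¬ (∀ X Y : VF n, ContDiffOn ℝ (⊤ : ℕ∞) X fc.U →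
        ContDiffOn ℝ (⊤ : ℕ∞) Y fc.U →
        (∀ p ∈ fc.U, InLXiPerp fc p (X p)) →
        (∀ p ∈ fc.U, InLXiPerp fc p (Y p)) →
        ∀ Z : VF n, ContDiffOn ℝ (⊤ : ℕ∞) Z fc.U →
        (∀ p ∈ fc.U, InLXi fc p (Z p)) →
        ∀ p ∈ fc.U, Gs fc p (nab X Y p + nab Y X p) (Z p) = 0) := by
  obtain ⟨p0, hp0⟩ := hU
  have posdef : ∀ p ∈ fc.U, ∀ v : Fin (n-1) → ℝ, v ≠ 0 →
      0 < ∑ a, ∑ b, gb fc E p a b * v a * v b := by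
    intro p hp v hv
    set w : Fin n → ℝ := fun i => ∑ x, v x * E x i p with hw
    have hquad : ∑ a, ∑ b, gb fc E p a b * v a * v b
        = ∑ i, ∑ j, fc.g i j p * w i * w j := by
      calc ∑ a, ∑ b, gb fc E p a b * v a * v b
          = ∑ a, ∑ b, ∑ i, ∑ j, fc.g i j p * E a i p * E b j p * v a * v b := by
            refine Finset.sum_congr rfl fun a _ => Finset.sum_congr rfl fun b _ => ?_
            simp only [gb, Finset.sum_mul]
        _ = ∑ i, ∑ j, ∑ a, ∑ b, fc.g i j p * E a i p * E b j p * v a * v b :=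
            aux_sum_comm4 _
        _ = ∑ i, ∑ j, fc.g i j p * w i * w j := by
            refine Finset.sum_congr rfl fun i _ => Finset.sum_congr rfl fun j _ => ?_
            rw [show w i = ∑ x, v x * E x i p from rfl,
              show w j = ∑ x, v x * E x j p from rfl]
            simp only [Finset.mul_sum, Finset.sum_mul]
            rw [Finset.sum_comm]
            exact Finset.sum_congr rfl fun x _ => Finset.sum_congr rfl fun y _ => by ring
    have hwne : w ≠ 0 := by
      intro h
      apply hv
      have hli := hE.2.1 p hp
      rw [Fintype.linearIndependent_iff] at hli
      funext x
      refine hli v ?_ x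
      funext i
      rw [Finset.sum_apply]
      simp only [Pi.smul_apply, smul_eq_mul]
      exact congrFun h i
    rw [hquad]
    exact fc.gposdef p hp w hwne
  have hn1 : 0 < n - 1 := by omega
  have a0 : Fin (n-1) := ⟨0, hn1⟩
  have hX : ContDiffOn ℝ (⊤:ℕ∞) (vb E a0) fc.U := contDiffOn_vb fc E a0 (hE.1 a0)
  have hZ : ContDiffOn ℝ (⊤:ℕ∞) (LV (n:=n)) fc.U := contDiffOn_LV
  set v1 : Fin (n-1) → ℝ := Pi.single a0 (1:ℝ) with hv1
  have hne : v1 ≠ 0 := by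
    intro h
    have := congrFun h a0
    simp [hv1] at this
  have hsum : ∑ a, ∑ b, gb fc E p0 a b * v1 a * v1 b = gb fc E p0 a0 a0 := by
    simp [hv1, Pi.single_apply, mul_ite, ite_mul, mul_zero, zero_mul, mul_one, one_mul,
      Finset.sum_ite_eq']
  have hpos : 0 < gb fc E p0 a0 a0 := by
    have := posdef p0 hp0 v1 hne
    rwa [hsum] at this
  have hk := key_symmetrized fc E hE nab hnab a0 a0 hp0
  refine ⟨fun a b p hp => key_symmetrized fc E hE nab hnab a b hp, posdef, ?_, ?_⟩
  · intro H
    have hperp : ∀ p ∈ fc.U, InVperp fc p (vb E a0 p) := fun p hp => hE.2.2 a0 p hp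
    have hZL : ∀ p ∈ fc.U, InL p (LV p) := fun p _ => ⟨1, (one_smul ℝ (LV p)).symm⟩
    have h0 := H (vb E a0) (vb E a0) hX hX hperp hperp LV hZ hZL p0 hp0
    rw [h0] at hk
    linarith
  · intro H
    have hperp : ∀ p ∈ fc.U, InLXiPerp fc p (vb E a0 p) :=
      fun p hp => ⟨hE.2.2 a0 p hp, Gs_vb_XI fc E a0 p⟩
    have hZL : ∀ p ∈ fc.U, InLXi fc p (LV p) := fun p _ => ⟨1, 0, by simp⟩
    have h0 := H (vb E a0) (vb E a0) hX hX hperp hperp LV hZ hZL p0 hp0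
    rw [h0] at hk
    linarith


end FinslerFoliations

end
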